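/- Let D₊, D₋, M ∈ ℝ^{N×N} satisfy the periodic upwind SBP property M D₊ + D₋ᵀ M = 0 with M symmetric positive definite and diagonal. Suppose v, w, ν, ω : ℝ → ℝ^N satisfy v' = −D₋ω − β(v²+w²)⊙w, w' = D₋ν + β(v²+w²)⊙v, τν' = D₊w − ω, τω' = −D₊v + ν, with τ > 0. Then the discrete mass M(t) = vᵀMv + wᵀMw + τνᵀMν + τωᵀMω is constant in time. -/

import Mathlib

/-- Semidiscrete mass conservation for the hyperbolized NLS semidiscretization
with periodic upwind SBP operators:
`M(t) = vᵀMv + wᵀMw + τνᵀMν + τωᵀMω` is constant in time. -/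
theorem hyperbolized_nls_mass_conservation (N : ℕ) (β τ : ℝ) (hτ : 0 < τ)
    (M Dp Dm : Matrix (Fin N) (Fin N) ℝ)
    (d : Fin N → ℝ) (hd : ∀ i, 0 < d i) (hM : M = Matrix.diagonal d)
    (hSBP : M * Dp + Dm.transpose * M = 0)
    (v w ν ω : ℝ → Fin N → ℝ)
    (hv : ∀ t : ℝ, HasDerivAt v
      (-(Dm.mulVec (ω t)) - fun i => β * (v t i ^ 2 + w t i ^ 2) * w t i) t)
    (hw : ∀ t : ℝ, HasDerivAt w
      (Dm.mulVec (ν t) + fun i => β * (v t i ^ 2 + w t i ^ 2) * v t i) t)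
    (hν : ∀ t : ℝ, HasDerivAt ν (τ⁻¹ • (Dp.mulVec (w t) - ω t)) t)
    (hω : ∀ t : ℝ, HasDerivAt ω (τ⁻¹ • (-(Dp.mulVec (v t)) + ν t)) t) :
    ∀ t₁ t₂ : ℝ,
      (dotProduct (v t₁) (M.mulVec (v t₁))
        + dotProduct (w t₁) (M.mulVec (w t₁))
        + τ * dotProduct (ν t₁) (M.mulVec (ν t₁))
        + τ * dotProduct (ω t₁) (M.mulVec (ω t₁)))
      = (dotProduct (v t₂) (M.mulVec (v t₂))
        + dotProduct (w t₂) (M.mulVec (w t₂))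
        + τ * dotProduct (ν t₂) (M.mulVec (ν t₂))
        + τ * dotProduct (ω t₂) (M.mulVec (ω t₂))) := by
  have hτ' : τ ≠ 0 := ne_of_gt hτ
  -- pointwise SBP property
  have hpt : ∀ i j, d i * Dp i j = -(Dm j i * d j) := by
    intro i j
    have h := congrFun (congrFun hSBP i) j
    simp [Matrix.add_apply, Matrix.mul_apply, hM, Matrix.diagonal,
      Finset.sum_ite_eq, Finset.sum_ite_eq', Matrix.transpose_apply] at h
    linarith [h]
  -- key SBP cancellation
  have key : ∀ x y : Fin N → ℝ,
      (∑ i, ∑ j, x i * d i * Dp i j * y j)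
        + (∑ i, ∑ j, y i * d i * Dm i j * x j) = 0 := by
    intro x y
    have h1 : (∑ i, ∑ j, x i * d i * Dp i j * y j)
        = ∑ i, ∑ j, x j * d j * Dp j i * y i := Finset.sum_comm
    rw [h1, ← Finset.sum_add_distrib]
    refine Finset.sum_eq_zero fun i _ => ?_
    rw [← Finset.sum_add_distrib]
    refine Finset.sum_eq_zero fun j _ => ?_
    linear_combination (x j * y i) * hpt j i
  -- the mass function
  set F : ℝ → ℝ := fun t => ∑ i, d i * ((v t i)^2 + (w t i)^2 + τ*(ν t i)^2 + τ*(ω t i)^2)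
    with hF
  have hFeq : ∀ t, (dotProduct (v t) (M.mulVec (v t))
        + dotProduct (w t) (M.mulVec (w t))
        + τ * dotProduct (ν t) (M.mulVec (ν t))
        + τ * dotProduct (ω t) (M.mulVec (ω t))) = F t := by
    intro t
    simp only [hF, hM, dotProduct, Matrix.mulVec_diagonal, Finset.mul_sum,
      ← Finset.sum_add_distrib]
    refine Finset.sum_congr rfl fun i _ => by ring
  have hder : ∀ t, HasDerivAt F 0 t := by
    intro t
    set A := (-(Dm.mulVec (ω t)) - fun i => β * (v t i ^ 2 + w t i ^ 2) * w t i) with hA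
    set B := (Dm.mulVec (ν t) + fun i => β * (v t i ^ 2 + w t i ^ 2) * v t i) with hB
    set C := (τ⁻¹ • (Dp.mulVec (w t) - ω t)) with hC
    set E := (τ⁻¹ • (-(Dp.mulVec (v t)) + ν t)) with hE
    have hvi := hasDerivAt_pi.mp (hv t)
    have hwi := hasDerivAt_pi.mp (hw t)
    have hνi := hasDerivAt_pi.mp (hν t)
    have hωi := hasDerivAt_pi.mp (hω t)
    have h1 : HasDerivAt F
        (∑ i, d i * (2 * v t i * A i + 2 * w t i * B i
          + τ * (2 * ν t i * C i) + τ * (2 * ω t i * E i))) t := by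
      refine HasDerivAt.fun_sum fun i _ => ?_
      have h := ((((hvi i).pow 2).add ((hwi i).pow 2)).add
        (((hνi i).pow 2).const_mul τ)).add
        (((hωi i).pow 2).const_mul τ) |>.const_mul (d i)
      convert h using 1
      · rfl
      · rfl
      simp only [hA, hB, hC, hE, Pi.sub_apply, Pi.add_apply, Pi.neg_apply,
        Pi.smul_apply, smul_eq_mul]
      ring
    convert h1 using 1
    have hCi : ∀ i, τ * C i = (Dp.mulVec (w t)) i - ω t i := by
      intro i
      simp only [hC, Pi.smul_apply, smul_eq_mul]
      rw [← mul_assoc, mul_inv_cancel₀ hτ', one_mul, Pi.sub_apply]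
    have hEi : ∀ i, τ * E i = -(Dp.mulVec (v t)) i + ν t i := by
      intro i
      simp only [hE, Pi.smul_apply, smul_eq_mul]
      rw [← mul_assoc, mul_inv_cancel₀ hτ', one_mul, Pi.add_apply, Pi.neg_apply]
    have step1 : (∑ i, d i * (2 * v t i * A i + 2 * w t i * B i
          + τ * (2 * ν t i * C i) + τ * (2 * ω t i * E i)))
        = ∑ i, (2 * (∑ j, ν t i * d i * Dp i j * w t j + ∑ j, w t i * d i * Dm i j * ν t j)
            - 2 * (∑ j, ω t i * d i * Dp i j * v t j + ∑ j, v t i * d i * Dm i j * ω t j)) := by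
      refine Finset.sum_congr rfl fun i _ => ?_
      have hc := hCi i
      have he := hEi i
      have hmv : ∀ (X : Matrix (Fin N) (Fin N) ℝ) (z : Fin N → ℝ),
          (X.mulVec z) i = ∑ j, X i j * z j := by
        intro X z; simp [Matrix.mulVec, dotProduct]
      simp only [hA, hB, Pi.sub_apply, Pi.add_apply, Pi.neg_apply] at *
      rw [hmv Dp (w t)] at hc
      rw [hmv Dp (v t)] at he
      rw [hmv Dm (ν t), hmv Dm (ω t)]
      have e1 : ∑ j, ν t i * d i * Dp i j * w t j = ν t i * d i * ∑ j, Dp i j * w t j := by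
        rw [Finset.mul_sum]; exact Finset.sum_congr rfl fun j _ => by ring
      have e2 : ∑ j, w t i * d i * Dm i j * ν t j = w t i * d i * ∑ j, Dm i j * ν t j := by
        rw [Finset.mul_sum]; exact Finset.sum_congr rfl fun j _ => by ring
      have e3 : ∑ j, ω t i * d i * Dp i j * v t j = ω t i * d i * ∑ j, Dp i j * v t j := by
        rw [Finset.mul_sum]; exact Finset.sum_congr rfl fun j _ => by ring
      have e4 : ∑ j, v t i * d i * Dm i j * ω t j = v t i * d i * ∑ j, Dm i j * ω t j := by
        rw [Finset.mul_sum]; exact Finset.sum_congr rfl fun j _ => by ring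
      rw [e1, e2, e3, e4]
      linear_combination (2 * ν t i * d i) * hc + (2 * ω t i * d i) * he
    rw [step1, Finset.sum_sub_distrib, ← Finset.mul_sum, ← Finset.mul_sum,
      Finset.sum_add_distrib, Finset.sum_add_distrib]
    have k1 := key (ν t) (w t)
    have k2 := key (ω t) (v t)
    rw [k1, k2]
    ring
  have hdiff : Differentiable ℝ F := fun t => (hder t).differentiableAt
  intro t₁ t₂
  rw [hFeq t₁, hFeq t₂]
  exact is_const_of_deriv_eq_zero hdiff (fun t => (hder t).deriv) t₁ t₂
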